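/- Every valuation v on F_q[u]² is equivalent under the SL₂(F_q[u])-action to a unique standard valuation v_{γ,δ} with γ ≤ δ. -/

import Mathlib

/-- The degree of a polynomial, as an element of `ℤ ∪ {-∞}`. -/
noncomputable def degZ {F : Type*} [Field F] (x : Polynomial F) : WithBot ℤ :=
  x.degree.map fun n : ℕ => (n : ℤ)

/-- The standard valuation `v_{γ,δ}(x,y) = max(γ + deg x, δ + deg y)` on `F_q[u]²`. -/
noncomputable def stdVal {F : Type*} [Field F] (γ δ : ℤ) (x y : Polynomial F) : WithBot ℤ :=
  max ((γ : WithBot ℤ) + degZ x) ((δ : WithBot ℤ) + degZ y)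

/-- A valuation on `F_q[u]²`: a function `w : F_q[u]² → ℤ ∪ {-∞}` with
`w(ax, ay) = deg a + w(x,y)`, `w(x₁+x₂, y₁+y₂) ≤ max(w(x₁,y₁), w(x₂,y₂))`, and bounded
below on nonzero vectors. -/
def IsPlaneValuation {F : Type*} [Field F]
    (w : Polynomial F × Polynomial F → WithBot ℤ) : Prop :=
  (∀ a x y : Polynomial F, w (a * x, a * y) = degZ a + w (x, y)) ∧
  (∀ x₁ y₁ x₂ y₂ : Polynomial F, w (x₁ + x₂, y₁ + y₂) ≤ max (w (x₁, y₁)) (w (x₂, y₂))) ∧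
  (∃ m : ℤ, ∀ x y : Polynomial F, ¬ (x = 0 ∧ y = 0) → (m : WithBot ℤ) ≤ w (x, y))

open Polynomial

section DegZ
variable {F : Type*} [Field F]

lemma degZ_of_ne_zero {x : Polynomial F} (hx : x ≠ 0) :
    degZ x = (x.natDegree : ℤ) := by
  rw [degZ, Polynomial.degree_eq_natDegree hx]; rfl

lemma degZ_zero : degZ (0 : Polynomial F) = ⊥ := by simp [degZ]

lemma degZ_nonneg {x : Polynomial F} (hx : x ≠ 0) : (0 : WithBot ℤ) ≤ degZ x := by
  rw [degZ_of_ne_zero hx]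
  exact_mod_cast Int.ofNat_nonneg _

lemma degZ_one : degZ (1 : Polynomial F) = ((0 : ℤ) : WithBot ℤ) := by
  rw [degZ_of_ne_zero (one_ne_zero : (1 : Polynomial F) ≠ 0)]; simp

lemma degZ_neg_one : degZ (-1 : Polynomial F) = ((0 : ℤ) : WithBot ℤ) := by
  rw [degZ_of_ne_zero (by simp : (-1 : Polynomial F) ≠ 0)]; simp

end DegZ

section Val
variable {F : Type*} [Field F] (w : Polynomial F × Polynomial F → WithBot ℤ)
  (hmul : ∀ a x y : Polynomial F, w (a * x, a * y) = degZ a + w (x, y))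
  (hadd : ∀ x₁ y₁ x₂ y₂ : Polynomial F,
    w (x₁ + x₂, y₁ + y₂) ≤ max (w (x₁, y₁)) (w (x₂, y₂)))

include hmul in
lemma val_neg (x y : Polynomial F) : w (-x, -y) = w (x, y) := by
  have := hmul (-1) x y
  simpa [degZ_neg_one] using this

include hmul hadd in
lemma val_ultra {x₁ y₁ x₂ y₂ : Polynomial F} (h : w (x₂, y₂) < w (x₁, y₁)) :
    w (x₁ + x₂, y₁ + y₂) = w (x₁, y₁) := by
  have h1 : w (x₁, y₁) ≤ max (w (x₁ + x₂, y₁ + y₂)) (w (x₂, y₂)) := by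
    have := hadd (x₁ + x₂) (y₁ + y₂) (-x₂) (-y₂)
    rw [val_neg w hmul] at this
    simpa using this
  have h2 := hadd x₁ y₁ x₂ y₂
  rcases le_max_iff.mp h1 with h1 | h1
  · exact le_antisymm (h2.trans (max_le le_rfl h.le)) h1
  · exact absurd h1 (not_le.mpr h)

include hmul hadd in
lemma val_main (a b c d : Polynomial F) (γ δ : ℤ) (hγδ : γ ≤ δ)
    (hab : w (a, b) = (γ : WithBot ℤ)) (hcd : w (c, d) = (δ : WithBot ℤ))
    (hmin : ∀ q : Polynomial F, (δ : WithBot ℤ) ≤ w (c + q * a, d + q * b)) :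
    ∀ x y : Polynomial F,
      w (a * x + c * y, b * x + d * y) =
        max ((γ : WithBot ℤ) + degZ x) ((δ : WithBot ℤ) + degZ y) := by
  have hwx : ∀ x : Polynomial F, w (a * x, b * x) = (γ : WithBot ℤ) + degZ x := by
    intro x
    rw [mul_comm a x, mul_comm b x, hmul, hab, add_comm]
  have hwy : ∀ y : Polynomial F, w (c * y, d * y) = (δ : WithBot ℤ) + degZ y := by
    intro y
    rw [mul_comm c y, mul_comm d y, hmul, hcd, add_comm]
  intro x y
  rcases eq_or_ne x 0 with rfl | hx
  · rw [mul_zero, mul_zero, zero_add, zero_add, hwy, degZ_zero]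
    simp
  rcases eq_or_ne y 0 with rfl | hy
  · rw [mul_zero, mul_zero, add_zero, add_zero, hwx, degZ_zero]
    simp
  rw [degZ_of_ne_zero hx, degZ_of_ne_zero hy]
  set dx := x.natDegree with hdx
  set dy := y.natDegree with hdy
  rcases lt_trichotomy (γ + (dx : ℤ)) (δ + (dy : ℤ)) with hlt | heq | hgt
  · have h1 : w (a * x, b * x) < w (c * y, d * y) := by
      rw [hwx, hwy, degZ_of_ne_zero hx, degZ_of_ne_zero hy]
      exact_mod_cast hlt
    have hle : ((γ : WithBot ℤ) + ((dx : ℤ) : WithBot ℤ)) ≤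
        ((δ : WithBot ℤ) + ((dy : ℤ) : WithBot ℤ)) := by exact_mod_cast hlt.le
    rw [add_comm (a * x) (c * y), add_comm (b * x) (d * y), val_ultra w hmul hadd h1, hwy,
      degZ_of_ne_zero hy, max_eq_right hle]
  · have hdyx : dy ≤ dx := by omega
    set y0 := y * C y.leadingCoeff⁻¹ with hy0
    have hmon : y0.Monic := monic_mul_leadingCoeff_inv hy
    have hdy0 : y0.degree = y.degree := degree_mul_leadingCoeff_inv y hy
    set q : Polynomial F := C y.leadingCoeff⁻¹ * (x /ₘ y0) with hq
    set r : Polynomial F := x %ₘ y0 with hrdef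
    have hdiv : r + y * q = x := by
      have h0 := modByMonic_add_div x y0
      calc r + y * q = x %ₘ y0 + y0 * (x /ₘ y0) := by rw [hrdef, hq, hy0]; ring
        _ = x := h0
    have hrlt : r.degree < y.degree := by
      rw [← hdy0]; exact degree_modByMonic_lt x hmon
    have hqbound : degZ q + (γ : WithBot ℤ) ≤ (δ : WithBot ℤ) := by
      by_cases hq0 : q = 0
      · rw [hq0, degZ_zero]; simp
      · have hsub : (y * q).degree ≤ x.degree := by
          have hxr : y * q = x - r := by rw [← hdiv]; ring
          rw [hxr]
          refine (degree_sub_le x r).trans (max_le le_rfl (hrlt.le.trans ?_))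
          rw [degree_eq_natDegree hx, degree_eq_natDegree hy]
          exact_mod_cast hdyx
        rw [degree_mul, degree_eq_natDegree hx, degree_eq_natDegree hy,
          degree_eq_natDegree hq0] at hsub
        have h1 : dy + q.natDegree ≤ dx := by exact_mod_cast hsub
        rw [degZ_of_ne_zero hq0]
        have h2 : (q.natDegree : ℤ) + γ ≤ δ := by omega
        exact_mod_cast h2
    have he2 : w (c + q * a, d + q * b) = (δ : WithBot ℤ) := by
      refine le_antisymm ?_ (hmin q)
      have h2 := hadd c d (q * a) (q * b)
      rw [hmul q a b, hab] at h2
      exact h2.trans (max_le (le_of_eq hcd) hqbound)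
    have hbig : w (y * (c + q * a), y * (d + q * b)) =
        (δ : WithBot ℤ) + ((dy : ℤ) : WithBot ℤ) := by
      rw [hmul, he2, degZ_of_ne_zero hy, add_comm]
    have hsmall : w (a * r, b * r) < w (y * (c + q * a), y * (d + q * b)) := by
      rw [hbig, hwx]
      rcases eq_or_ne r 0 with hr0 | hr0
      · rw [hr0, degZ_zero]
        have hco : ((δ : WithBot ℤ) + ((dy : ℤ) : WithBot ℤ)) = ((δ + dy : ℤ) : WithBot ℤ) := by
          push_cast; rfl
        rw [hco]
        simpa using WithBot.bot_lt_coe (δ + dy)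
      · rw [degZ_of_ne_zero hr0]
        have hnr : r.natDegree < dy := natDegree_lt_natDegree hr0 hrlt
        have h3 : γ + (r.natDegree : ℤ) < δ + dy := by omega
        exact_mod_cast h3
    have harg1 : a * x + c * y = y * (c + q * a) + a * r := by rw [← hdiv]; ring
    have harg2 : b * x + d * y = y * (d + q * b) + b * r := by rw [← hdiv]; ring
    rw [harg1, harg2, val_ultra w hmul hadd hsmall, hbig]
    have hco : ((γ : WithBot ℤ) + ((dx : ℤ) : WithBot ℤ)) =
        ((δ : WithBot ℤ) + ((dy : ℤ) : WithBot ℤ)) := by exact_mod_cast heq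
    rw [hco, max_self]
  · have h1 : w (c * y, d * y) < w (a * x, b * x) := by
      rw [hwx, hwy, degZ_of_ne_zero hx, degZ_of_ne_zero hy]
      exact_mod_cast hgt
    have hle : ((δ : WithBot ℤ) + ((dy : ℤ) : WithBot ℤ)) ≤
        ((γ : WithBot ℤ) + ((dx : ℤ) : WithBot ℤ)) := by exact_mod_cast hgt.le
    rw [val_ultra w hmul hadd h1, hwx, degZ_of_ne_zero hx, max_eq_left hle]

end Val

section Std
variable {F : Type*} [Field F]

lemma stdVal_one_zero (γ δ : ℤ) : stdVal γ δ (1 : Polynomial F) 0 = (γ : WithBot ℤ) := by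
  rw [stdVal, degZ_zero, degZ_one]; simp

lemma stdVal_zero_one (γ δ : ℤ) : stdVal γ δ (0 : Polynomial F) 1 = (δ : WithBot ℤ) := by
  rw [stdVal, degZ_zero, degZ_one]; simp

lemma stdVal_ge (γ δ : ℤ) (h : γ ≤ δ) (x y : Polynomial F)
    (hne : ¬(x = 0 ∧ y = 0)) : (γ : WithBot ℤ) ≤ stdVal γ δ x y := by
  rcases eq_or_ne x 0 with rfl | hx
  · have hy : y ≠ 0 := fun hy => hne ⟨rfl, hy⟩
    refine le_trans ?_ (le_max_right _ _)
    calc (γ : WithBot ℤ) ≤ (δ : WithBot ℤ) := by exact_mod_cast h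
      _ = (δ : WithBot ℤ) + 0 := by rw [add_zero]
      _ ≤ (δ : WithBot ℤ) + degZ y := add_le_add le_rfl (degZ_nonneg hy)
  · refine le_trans ?_ (le_max_left _ _)
    calc (γ : WithBot ℤ) = (γ : WithBot ℤ) + 0 := by rw [add_zero]
      _ ≤ (γ : WithBot ℤ) + degZ x := add_le_add le_rfl (degZ_nonneg hx)

lemma stdVal_pair (γ δ : ℤ) (a b c d : Polynomial F) (hdet : a * d - c * b = 1) :
    (δ : WithBot ℤ) ≤ max (stdVal γ δ a b) (stdVal γ δ c d) := by
  by_contra hcon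
  push_neg at hcon
  rw [max_lt_iff] at hcon
  obtain ⟨h1, h2⟩ := hcon
  have hb : b = 0 := by
    by_contra hb
    have := lt_of_le_of_lt (le_max_right _ _) h1
    rw [degZ_of_ne_zero hb] at this
    have h0 : (δ : ℤ) + b.natDegree < δ := by exact_mod_cast this
    omega
  have hd : d = 0 := by
    by_contra hd
    have := lt_of_le_of_lt (le_max_right _ _) h2
    rw [degZ_of_ne_zero hd] at this
    have h0 : (δ : ℤ) + d.natDegree < δ := by exact_mod_cast this
    omega
  rw [hb, hd] at hdet
  simp at hdet

end Std

/-- Every valuation on `F_q[u]²` is equivalent, under the action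
`(v ⋆ M)(x,y) = v((x,y)Mᵀ)` of `SL₂(F_q[u])`, to a unique standard valuation `v_{γ,δ}`
with `γ ≤ δ`. -/
theorem valuation_equivalent_to_unique_standard (F : Type*) [Field F]
    (w : Polynomial F × Polynomial F → WithBot ℤ) (hw : IsPlaneValuation w) :
    ∃! p : ℤ × ℤ, p.1 ≤ p.2 ∧
      ∃ M : Matrix (Fin 2) (Fin 2) (Polynomial F), M.det = 1 ∧
        ∀ x y : Polynomial F,
          w (M 0 0 * x + M 0 1 * y, M 1 0 * x + M 1 1 * y) = stdVal p.1 p.2 x y := by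
  classical
  obtain ⟨hmul, hadd, m, hm⟩ := hw
  -- nonzero vectors have finite value
  have hnb : ∀ x y : Polynomial F, ¬(x = 0 ∧ y = 0) →
      ∃ n : ℤ, w (x, y) = (n : WithBot ℤ) ∧ m ≤ n := by
    intro x y h
    have h1 := hm x y h
    have hwne : w (x, y) ≠ ⊥ := by
      intro hb
      rw [hb, le_bot_iff] at h1
      exact WithBot.coe_ne_bot h1
    rcases WithBot.ne_bot_iff_exists.mp hwne with ⟨n, hn⟩
    refine ⟨n, hn.symm, ?_⟩
    rw [← hn] at h1
    exact_mod_cast h1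
  -- minimize over coprime pairs
  obtain ⟨γ, ⟨a, b, hcoab, hab⟩, hγmin⟩ :=
    Int.exists_least_of_bdd (P := fun n => ∃ x y : Polynomial F,
        IsCoprime x y ∧ w (x, y) = (n : WithBot ℤ))
      ⟨m, fun z ⟨x, y, hc, hz⟩ => by
        have hne : ¬(x = 0 ∧ y = 0) := by
          rintro ⟨rfl, rfl⟩
          exact not_isCoprime_zero_zero hc
        obtain ⟨n, hn, hmn⟩ := hnb x y hne
        rw [hn] at hz
        have : z = n := by exact_mod_cast hz.symm
        omega⟩
      ⟨WithBot.unbotD 0 (w (1, 0)), 1, 0, isCoprime_one_left, by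
        obtain ⟨n, hn, -⟩ := hnb 1 0 (by simp)
        rw [hn]; rfl⟩
  obtain ⟨s, t, hst⟩ := hcoab
  -- minimize over second column choices
  have hcol : ∀ e : Polynomial F, ¬(-t + e * a = 0 ∧ s + e * b = 0) := by
    rintro e ⟨h1, h2⟩
    have : (1 : Polynomial F) = 0 := by linear_combination a * h2 - b * h1 - hst
    exact one_ne_zero this
  obtain ⟨δ, ⟨e₀, he₂⟩, hδmin⟩ :=
    Int.exists_least_of_bdd (P := fun n => ∃ e : Polynomial F,
        w (-t + e * a, s + e * b) = (n : WithBot ℤ))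
      ⟨m, fun z ⟨e, hz⟩ => by
        obtain ⟨n, hn, hmn⟩ := hnb _ _ (hcol e)
        rw [hn] at hz
        have : z = n := by exact_mod_cast hz.symm
        omega⟩
      ⟨WithBot.unbotD 0 (w (-t + 0 * a, s + 0 * b)), 0, by
        obtain ⟨n, hn, -⟩ := hnb _ _ (hcol 0)
        rw [hn]; rfl⟩
  set c : Polynomial F := -t + e₀ * a with hcdef
  set d : Polynomial F := s + e₀ * b with hddef
  have hcd : w (c, d) = (δ : WithBot ℤ) := he₂
  have hdet : a * d - c * b = 1 := by
    rw [hcdef, hddef]; linear_combination hst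
  have hγδ : γ ≤ δ := by
    refine hγmin δ ⟨c, d, ⟨-b, a, by linear_combination hdet⟩, hcd⟩
  have hmin : ∀ q : Polynomial F, (δ : WithBot ℤ) ≤ w (c + q * a, d + q * b) := by
    intro q
    have harg1 : c + q * a = -t + (e₀ + q) * a := by rw [hcdef]; ring
    have harg2 : d + q * b = s + (e₀ + q) * b := by rw [hddef]; ring
    obtain ⟨n, hn, -⟩ := hnb _ _ (harg1 ▸ harg2 ▸ hcol (e₀ + q))
    rw [hn]
    have : δ ≤ n := hδmin n ⟨e₀ + q, by rw [← harg1, ← harg2]; exact hn⟩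
    exact_mod_cast this
  have hK := val_main w hmul hadd a b c d γ δ hγδ hab hcd hmin
  refine ⟨(γ, δ), ⟨hγδ, !![a, c; b, d], ?_, ?_⟩, ?_⟩
  · rw [Matrix.det_fin_two_of]; linear_combination hdet
  · intro x y
    simpa [stdVal] using hK x y
  · rintro ⟨γ', δ'⟩ ⟨hγδ', M', hdetM', hM'⟩
    simp only at hγδ' hM'
    set a' := M' 0 0 with ha'
    set c' := M' 0 1 with hc'
    set b' := M' 1 0 with hb'
    set d' := M' 1 1 with hd'
    have hdet' : a' * d' - c' * b' = 1 := by
      rw [Matrix.det_fin_two M'] at hdetM'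
      linear_combination hdetM'
    -- the comparison matrix C = M⁻¹ M'
    set C00 : Polynomial F := d * a' - c * b' with hC00
    set C01 : Polynomial F := d * c' - c * d' with hC01
    set C10 : Polynomial F := -b * a' + a * b' with hC10
    set C11 : Polynomial F := -b * c' + a * d' with hC11
    have hdetC : C00 * C11 - C01 * C10 = 1 := by
      have : C00 * C11 - C01 * C10 = (a * d - c * b) * (a' * d' - c' * b') := by
        rw [hC00, hC01, hC10, hC11]; ring
      rw [this, hdet, hdet', mul_one]
    have hkey : ∀ x y : Polynomial F,
        stdVal γ δ (C00 * x + C01 * y) (C10 * x + C11 * y) = stdVal γ' δ' x y := by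
      intro x y
      have e1 : a * (C00 * x + C01 * y) + c * (C10 * x + C11 * y) = a' * x + c' * y := by
        rw [hC00, hC01, hC10, hC11]; linear_combination (a' * x + c' * y) * hdet
      have e2 : b * (C00 * x + C01 * y) + d * (C10 * x + C11 * y) = b' * x + d' * y := by
        rw [hC00, hC01, hC10, hC11]; linear_combination (b' * x + d' * y) * hdet
      have h1 := hK (C00 * x + C01 * y) (C10 * x + C11 * y)
      rw [e1, e2] at h1
      rw [stdVal, ← h1, hM' x y, stdVal]
    have hrev : ∀ x y : Polynomial F,
        stdVal γ' δ' (C11 * x + -C01 * y) (-C10 * x + C00 * y) = stdVal γ δ x y := by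
      intro x y
      have f1 : C00 * (C11 * x + -C01 * y) + C01 * (-C10 * x + C00 * y) = x := by
        linear_combination x * hdetC
      have f2 : C10 * (C11 * x + -C01 * y) + C11 * (-C10 * x + C00 * y) = y := by
        linear_combination y * hdetC
      have := hkey (C11 * x + -C01 * y) (-C10 * x + C00 * y)
      rw [f1, f2] at this
      exact this.symm
    -- γ' = γ
    have hk10 : stdVal γ δ C00 C10 = (γ' : WithBot ℤ) := by
      have := hkey 1 0
      simpa [stdVal_one_zero] using this
    have hk01 : stdVal γ δ C01 C11 = (δ' : WithBot ℤ) := by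
      have := hkey 0 1
      simpa [stdVal_zero_one] using this
    have hr10 : stdVal γ' δ' C11 (-C10) = (γ : WithBot ℤ) := by
      have := hrev 1 0
      simpa [stdVal_one_zero] using this
    have hr01 : stdVal γ' δ' (-C01) C00 = (δ : WithBot ℤ) := by
      have := hrev 0 1
      simpa [stdVal_zero_one] using this
    have hne1 : ¬(C00 = 0 ∧ C10 = 0) := by
      rintro ⟨h1, h2⟩
      rw [h1, h2] at hdetC
      simp at hdetC
    have hne2 : ¬(C11 = 0 ∧ -C10 = 0) := by
      rintro ⟨h1, h2⟩
      rw [h1, neg_eq_zero.mp h2] at hdetC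
      simp at hdetC
    have hγle : γ ≤ γ' := by
      have := stdVal_ge γ δ hγδ C00 C10 hne1
      rw [hk10] at this
      exact_mod_cast this
    have hγ'le : γ' ≤ γ := by
      have := stdVal_ge γ' δ' hγδ' C11 (-C10) hne2
      rw [hr10] at this
      exact_mod_cast this
    have hδle : δ ≤ δ' := by
      have h1 := stdVal_pair γ δ C00 C10 C01 C11 (by linear_combination hdetC)
      rw [hk10, hk01] at h1
      have h2 : max ((γ' : WithBot ℤ)) ((δ' : WithBot ℤ)) = (δ' : WithBot ℤ) :=
        max_eq_right (by exact_mod_cast hγδ')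
      rw [h2] at h1
      exact_mod_cast h1
    have hδ'le : δ' ≤ δ := by
      have h1 := stdVal_pair γ' δ' C11 (-C10) (-C01) C00 (by linear_combination hdetC)
      rw [hr10, hr01] at h1
      have h2 : max ((γ : WithBot ℤ)) ((δ : WithBot ℤ)) = (δ : WithBot ℤ) :=
        max_eq_right (by exact_mod_cast hγδ)
      rw [h2] at h1
      exact_mod_cast h1
    have : γ' = γ := le_antisymm hγ'le hγle
    have : δ' = δ := le_antisymm hδ'le hδle
    simp_all
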